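/- Let λ > 0 and let w > 0 satisfy the transcendental equation (λ²w² − 1)·sin(w) = 2λw·cos(w). Define b : ℝ → ℝ by b(x) := sin(wx) + λw·cos(wx) and θ := 2λ/(λ²w² + 1). Then for every x ∈ [0, 1], ∫_{0}^{1} exp(−|x − y|/λ)·b(y) dy = θ·b(x); that is, (θ, b) is an eigenvalue–eigenfunction pair of the integral operator on [0, 1] with exponential covariance kernel C(x, y) = exp(−|x − y|/λ). -/

import Mathlib

/-- If `w > 0` solves the transcendental equation `(λ²w² - 1)·sin w = 2λw·cos w`,
then `b(x) = sin(wx) + λw·cos(wx)` is an eigenfunction, with eigenvalue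
`θ = 2λ/(λ²w² + 1)`, of the integral operator on `[0,1]` with exponential
covariance kernel `C(x,y) = exp(-|x-y|/λ)`. -/
theorem kl_exponential_kernel_eigenpair
    (lam : ℝ) (hlam : 0 < lam) (w : ℝ) (hw : 0 < w)
    (hroot : (lam ^ 2 * w ^ 2 - 1) * Real.sin w = 2 * lam * w * Real.cos w)
    (b : ℝ → ℝ) (hb : b = fun x => Real.sin (w * x) + lam * w * Real.cos (w * x))
    (θ : ℝ) (hθ : θ = 2 * lam / (lam ^ 2 * w ^ 2 + 1)) :
    ∀ x ∈ Set.Icc (0 : ℝ) 1,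
      ∫ y in (0 : ℝ)..1, Real.exp (-|x - y| / lam) * b y = θ * b x := by
  intro x hx
  obtain ⟨hx0, hx1⟩ := hx
  have hlam' : lam ≠ 0 := ne_of_gt hlam
  have hD : (0:ℝ) < lam ^ 2 * w ^ 2 + 1 := by positivity
  have hD' : lam ^ 2 * w ^ 2 + 1 ≠ 0 := ne_of_gt hD
  set A : ℝ := lam * (lam ^ 2 * w ^ 2 - 1) / (lam ^ 2 * w ^ 2 + 1) with hA
  set B : ℝ := -(2 * lam ^ 2 * w) / (lam ^ 2 * w ^ 2 + 1) with hB
  -- continuity of integrand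
  have hcont : Continuous (fun y : ℝ => Real.exp (-|x - y| / lam) * b y) := by
    subst hb; fun_prop
  -- split at x
  have hsplit : (∫ y in (0:ℝ)..x, Real.exp (-|x - y| / lam) * b y)
        + (∫ y in x..1, Real.exp (-|x - y| / lam) * b y)
      = ∫ y in (0:ℝ)..1, Real.exp (-|x - y| / lam) * b y :=
    intervalIntegral.integral_add_adjacent_intervals
      (hcont.intervalIntegrable _ _) (hcont.intervalIntegrable _ _)
  -- antiderivative for the left piece
  have hF : ∀ y : ℝ, HasDerivAt (fun t => lam * Real.exp (t / lam) * Real.sin (w * t))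
      (Real.exp (y / lam) * b y) y := by
    intro y
    have h1 : HasDerivAt (fun t : ℝ => t / lam) (1 / lam) y := by
      simpa using (hasDerivAt_id y).div_const lam
    have h2 : HasDerivAt (fun t : ℝ => Real.exp (t / lam))
        (Real.exp (y / lam) * (1 / lam)) y := (Real.hasDerivAt_exp _).comp y h1
    have h3 : HasDerivAt (fun t : ℝ => w * t) w y := by
      simpa using (hasDerivAt_id y).const_mul w
    have h4 : HasDerivAt (fun t : ℝ => Real.sin (w * t))
        (Real.cos (w * y) * w) y := (Real.hasDerivAt_sin _).comp y h3
    have := (h2.const_mul lam).mul h4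
    refine this.congr_deriv ?_
    rw [hb]
    field_simp
  -- antiderivative for the right piece
  have hG : ∀ y : ℝ, HasDerivAt
      (fun t => Real.exp (-t / lam) * (A * Real.sin (w * t) + B * Real.cos (w * t)))
      (Real.exp (-y / lam) * b y) y := by
    intro y
    have h1 : HasDerivAt (fun t : ℝ => -t / lam) (-1 / lam) y := by
      simpa using ((hasDerivAt_id y).neg).div_const lam
    have h2 : HasDerivAt (fun t : ℝ => Real.exp (-t / lam))
        (Real.exp (-y / lam) * (-1 / lam)) y := (Real.hasDerivAt_exp _).comp y h1
    have h3 : HasDerivAt (fun t : ℝ => w * t) w y := by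
      simpa using (hasDerivAt_id y).const_mul w
    have h4 : HasDerivAt (fun t : ℝ => Real.sin (w * t))
        (Real.cos (w * y) * w) y := (Real.hasDerivAt_sin _).comp y h3
    have h5 : HasDerivAt (fun t : ℝ => Real.cos (w * t))
        (-Real.sin (w * y) * w) y := (Real.hasDerivAt_cos _).comp y h3
    have := h2.mul ((h4.const_mul A).add (h5.const_mul B))
    refine this.congr_deriv ?_
    rw [Pi.add_apply, hb, hA, hB]
    field_simp
    ring
  have hbc : Continuous b := by subst hb; fun_prop
  have hexp1 : Real.exp (-x / lam) * Real.exp (x / lam) = 1 := by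
    have h0 : -x / lam + x / lam = 0 := by ring
    rw [← Real.exp_add, h0, Real.exp_zero]
  -- evaluate left piece
  have hI1 : (∫ y in (0:ℝ)..x, Real.exp (-|x - y| / lam) * b y)
      = lam * Real.sin (w * x) := by
    have heq : ∀ y ∈ Set.uIcc (0:ℝ) x,
        Real.exp (-|x - y| / lam) * b y
          = Real.exp (-x / lam) * (Real.exp (y / lam) * b y) := by
      intro y hy
      rw [Set.uIcc_of_le hx0] at hy
      rw [abs_of_nonneg (sub_nonneg.2 hy.2)]
      have : Real.exp (-(x - y) / lam) = Real.exp (-x / lam) * Real.exp (y / lam) := by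
        rw [← Real.exp_add]; congr 1; field_simp; ring
      rw [this]; ring
    rw [intervalIntegral.integral_congr heq, intervalIntegral.integral_const_mul,
      intervalIntegral.integral_eq_sub_of_hasDerivAt (fun y _ => hF y)
        (((Real.continuous_exp.comp (by fun_prop)).mul hbc).intervalIntegrable _ _)]
    simp only [mul_zero, Real.sin_zero, zero_div, Real.exp_zero]
    rw [mul_sub, mul_zero, sub_zero]
    linear_combination lam * Real.sin (w * x) * hexp1
  -- the boundary value at 1 vanishes by the root equation
  have hbd : A * Real.sin (w * 1) + B * Real.cos (w * 1) = 0 := by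
    rw [mul_one, hA, hB]
    field_simp
    linear_combination lam * hroot
  -- evaluate right piece
  have hI2 : (∫ y in x..1, Real.exp (-|x - y| / lam) * b y)
      = -(A * Real.sin (w * x) + B * Real.cos (w * x)) := by
    have heq : ∀ y ∈ Set.uIcc x 1,
        Real.exp (-|x - y| / lam) * b y
          = Real.exp (x / lam) * (Real.exp (-y / lam) * b y) := by
      intro y hy
      rw [Set.uIcc_of_le hx1] at hy
      rw [abs_of_nonpos (sub_nonpos.2 hy.1)]
      have : Real.exp (- -(x - y) / lam) = Real.exp (x / lam) * Real.exp (-y / lam) := by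
        rw [← Real.exp_add]; congr 1; field_simp; ring
      rw [this]; ring
    rw [intervalIntegral.integral_congr heq, intervalIntegral.integral_const_mul,
      intervalIntegral.integral_eq_sub_of_hasDerivAt (fun y _ => hG y)
        (((Real.continuous_exp.comp (by fun_prop)).mul hbc).intervalIntegrable _ _)]
    rw [hbd, mul_sub, mul_zero]
    linear_combination -(A * Real.sin (w * x) + B * Real.cos (w * x)) * hexp1
  -- assemble
  rw [← hsplit, hI1, hI2, hb, hθ, hA, hB]
  field_simp
  ring
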